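/- Let F(ω,x)=(σω,f_{ω_0}(x)) be the skew product on Σ_m×X and g(ω,x)=c+φ(x) with c∈ℝ, φ∈C(X,ℝ). Then: (a) for every natural n and every 0<ε<1/2, P_n(F,g,ε) ≥ e^{nc}·m^n·P_n(f_0,…,f_{m−1},φ,ε); and (b) for every ε>0 there is a positive constant K(ε), depending only on ε, such that Q_n(F,g,ε) ≤ K(ε)·e^{nc}·m^n·Q_n(f_0,…,f_{m−1},φ,ε) for all natural n. Here P_n(F,g,ε) and Q_n(F,g,ε) are the classical separated-set and spanning-set partition sums of the single transformation F with potential g. -/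

import Mathlib

open Filter Topology MeasureTheory Set

namespace FSA

/-- `f_w = f_{w₁} ∘ ⋯ ∘ f_{w_k}` for the word `w = [w₁,…,w_k]`; the empty word acts as
the identity. -/
def wordMap {X : Type*} {ι : Type*} (f : ι → X → X) : List ι → X → X
  | [] => id
  | a :: t => f a ∘ wordMap f t

/-- `(S_wφ)(x) = Σ_{w'} φ(f_{w'}x)`, summing over the `|w|` words `w'` consisting of the
empty word and the proper suffixes of `w`. -/
noncomputable def birkhoff {X : Type*} {ι : Type*} (f : ι → X → X) (φ : X → ℝ)
    (w : List ι) (x : X) : ℝ :=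
  (w.tails.tail.map fun w' => φ (wordMap f w' x)).sum

section Core

variable {X : Type*} {ι : Type*}

/-- Bowen metric `d_w(x,y) = max_{w'≤w} d(f_{w'}x, f_{w'}y)`, the maximum ranging over all
suffixes of `w` (including `w` itself and the empty word). -/
noncomputable def bowenDist [PseudoMetricSpace X] (f : ι → X → X) (w : List ι) (x y : X) : ℝ :=
  (w.tails.map fun w' => dist (wordMap f w' x) (wordMap f w' y)).foldr max 0

/-- `E` is a `(w,ε)`-spanning set. -/
def IsSpanningSet [PseudoMetricSpace X] (f : ι → X → X) (w : List ι) (ε : ℝ)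
    (E : Finset X) : Prop :=
  ∀ x : X, ∃ y ∈ E, bowenDist f w x y < ε

/-- `E` is a `(w,ε)`-separated set. -/
def IsSeparatedSet [PseudoMetricSpace X] (f : ι → X → X) (w : List ι) (ε : ℝ)
    (E : Finset X) : Prop :=
  ∀ x ∈ E, ∀ y ∈ E, x ≠ y → ε ≤ bowenDist f w x y

/-- `Q_w(φ,ε) = inf { Σ_{x∈E} e^{(S_wφ)(x)} : E a (w,ε)-spanning set }`. -/
noncomputable def Qword [PseudoMetricSpace X] (f : ι → X → X) (φ : X → ℝ) (w : List ι)
    (ε : ℝ) : ℝ :=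
  sInf {s : ℝ | ∃ E : Finset X, IsSpanningSet f w ε E ∧
    s = ∑ x ∈ E, Real.exp (birkhoff f φ w x)}

/-- `P_w(φ,ε) = sup { Σ_{x∈E} e^{(S_wφ)(x)} : E a (w,ε)-separated set }`. -/
noncomputable def Pword [PseudoMetricSpace X] (f : ι → X → X) (φ : X → ℝ) (w : List ι)
    (ε : ℝ) : ℝ :=
  sSup {s : ℝ | ∃ E : Finset X, IsSeparatedSet f w ε E ∧
    s = ∑ x ∈ E, Real.exp (birkhoff f φ w x)}

/-- `Q_n(φ,ε) = m^{-n} Σ_{|w|=n} Q_w(φ,ε)`. -/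
noncomputable def Qn [PseudoMetricSpace X] [Fintype ι] (f : ι → X → X) (φ : X → ℝ)
    (n : ℕ) (ε : ℝ) : ℝ :=
  (1 / (Fintype.card ι : ℝ) ^ n) * ∑ w : Fin n → ι, Qword f φ (List.ofFn w) ε

/-- `P_n(φ,ε) = m^{-n} Σ_{|w|=n} P_w(φ,ε)`. -/
noncomputable def Pn [PseudoMetricSpace X] [Fintype ι] (f : ι → X → X) (φ : X → ℝ)
    (n : ℕ) (ε : ℝ) : ℝ :=
  (1 / (Fintype.card ι : ℝ) ^ n) * ∑ w : Fin n → ι, Pword f φ (List.ofFn w) ε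

/-- Topological pressure of the free semigroup action,
`P(f₀,…,f_{m-1},φ) = lim_{ε→0} limsup_{n→∞} (1/n) log Q_n(φ,ε)`.
Since the inner quantity is nonincreasing in `ε`, the limit as `ε → 0⁺` equals the
supremum over `ε > 0`. -/
noncomputable def pressure [PseudoMetricSpace X] [Fintype ι] (f : ι → X → X) (φ : X → ℝ) :
    EReal :=
  ⨆ (ε : ℝ) (_ : 0 < ε),
    Filter.limsup (fun n : ℕ => (↑(Real.log (Qn f φ n ε) / (n : ℝ)) : EReal)) atTop

end Core

section Sigma

open scoped Classical

/-- The two-sided full shift space `Σ_m` of sequences `(…,ω₋₁,ω₀,ω₁,…)` with entries in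
`{0,…,m-1}`. -/
def SigmaSpace (m : ℕ) : Type := ℤ → Fin m

/-- The metric `d(ω,ω') = 2^{-k}`, `k = min {|n| : ωₙ ≠ ω'ₙ}` on `Σ_m`. -/
noncomputable def sdist (m : ℕ) (ω ω' : SigmaSpace m) : ℝ :=
  if ω = ω' then 0
  else (1 / 2 : ℝ) ^ sInf {k : ℕ | ∃ n : ℤ, n.natAbs = k ∧ ω n ≠ ω' n}

lemma sdist_nonneg (m : ℕ) (ω ω' : SigmaSpace m) : 0 ≤ sdist m ω ω' := by
  unfold sdist
  split
  · exact le_refl 0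
  · positivity

lemma sdist_self (m : ℕ) (ω : SigmaSpace m) : sdist m ω ω = 0 := by
  simp [sdist]

lemma sdist_comm (m : ℕ) (ω ω' : SigmaSpace m) : sdist m ω ω' = sdist m ω' ω := by
  unfold sdist
  by_cases h : ω = ω'
  · simp [h]
  · rw [if_neg h, if_neg (fun h' => h h'.symm)]
    congr 2
    ext k
    exact ⟨fun ⟨n, h1, h2⟩ => ⟨n, h1, h2.symm⟩, fun ⟨n, h1, h2⟩ => ⟨n, h1, h2.symm⟩⟩

lemma sdist_triangle (m : ℕ) (x y z : SigmaSpace m) :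
    sdist m x z ≤ sdist m x y + sdist m y z := by
  by_cases hxz : x = z
  · rw [sdist, if_pos hxz]
    exact add_nonneg (sdist_nonneg m x y) (sdist_nonneg m y z)
  · by_cases hxy : x = y
    · subst hxy
      rw [sdist_self]
      simp
    · by_cases hyz : y = z
      · subst hyz
        rw [sdist_self]
        simp
      · unfold sdist
        rw [if_neg hxz, if_neg hxy, if_neg hyz]
        set S₀ := {k : ℕ | ∃ n : ℤ, n.natAbs = k ∧ x n ≠ z n} with hS₀def
        set S₁ := {k : ℕ | ∃ n : ℤ, n.natAbs = k ∧ x n ≠ y n} with hS₁def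
        set S₂ := {k : ℕ | ∃ n : ℤ, n.natAbs = k ∧ y n ≠ z n} with hS₂def
        have hne : S₀.Nonempty := by
          rcases Function.ne_iff.mp hxz with ⟨n, hn⟩
          exact ⟨n.natAbs, n, rfl, hn⟩
        obtain ⟨n, hn, hnxz⟩ := Nat.sInf_mem hne
        have hcase : x n ≠ y n ∨ y n ≠ z n := by
          by_contra hc
          push_neg at hc
          exact hnxz (hc.1.trans hc.2)
        rcases hcase with h | h
        · have h1 : sInf S₁ ≤ sInf S₀ := Nat.sInf_le ⟨n, hn, h⟩
          have h3 : (1 / 2 : ℝ) ^ sInf S₀ ≤ (1 / 2 : ℝ) ^ sInf S₁ :=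
            pow_le_pow_of_le_one (by norm_num) (by norm_num) h1
          have h2 : (0:ℝ) ≤ (1 / 2 : ℝ) ^ sInf S₂ := by positivity
          linarith
        · have h1 : sInf S₂ ≤ sInf S₀ := Nat.sInf_le ⟨n, hn, h⟩
          have h3 : (1 / 2 : ℝ) ^ sInf S₀ ≤ (1 / 2 : ℝ) ^ sInf S₂ :=
            pow_le_pow_of_le_one (by norm_num) (by norm_num) h1
          have h2 : (0:ℝ) ≤ (1 / 2 : ℝ) ^ sInf S₁ := by positivity
          linarith

lemma eq_of_sdist_eq_zero (m : ℕ) (x y : SigmaSpace m) (h : sdist m x y = 0) : x = y := by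
  by_contra hxy
  rw [sdist, if_neg hxy] at h
  have : (0:ℝ) < (1 / 2 : ℝ) ^ sInf {k : ℕ | ∃ n : ℤ, n.natAbs = k ∧ x n ≠ y n} := by
    positivity
  linarith

noncomputable instance (m : ℕ) : MetricSpace (SigmaSpace m) where
  dist := sdist m
  dist_self := sdist_self m
  dist_comm := sdist_comm m
  dist_triangle := sdist_triangle m
  eq_of_dist_eq_zero := eq_of_sdist_eq_zero m _ _

/-- The Bernoulli shift `(σω)ᵢ = ω_{i+1}` on `Σ_m`. -/
def shift (m : ℕ) : SigmaSpace m → SigmaSpace m := fun ω i => ω (i + 1)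

end Sigma
section AuxGeneral

lemma foldr_max_nonneg (l : List ℝ) : 0 ≤ l.foldr max 0 := by
  induction l with
  | nil => simp
  | cons a t ih => exact le_max_of_le_right ih

lemma le_foldr_max {l : List ℝ} {a : ℝ} (h : a ∈ l) : a ≤ l.foldr max 0 := by
  induction l with
  | nil => simp at h
  | cons b t ih =>
    rcases List.mem_cons.1 h with h | h
    · subst h; exact le_max_left _ _
    · exact le_trans (ih h) (le_max_right _ _)

lemma foldr_max_le {l : List ℝ} {c : ℝ} (hc : 0 ≤ c) (h : ∀ a ∈ l, a ≤ c) :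
    l.foldr max 0 ≤ c := by
  induction l with
  | nil => exact hc
  | cons b t ih => exact max_le (h b (by simp)) (ih fun a ha => h a (by simp [ha]))

lemma foldr_max_lt {l : List ℝ} {c : ℝ} (hc : 0 < c) (h : ∀ a ∈ l, a < c) :
    l.foldr max 0 < c := by
  induction l with
  | nil => exact hc
  | cons b t ih => exact max_lt (h b (by simp)) (ih fun a ha => h a (by simp [ha]))

lemma list_sum_le {M : ℝ} : ∀ {l : List ℝ}, (∀ a ∈ l, a ≤ M) → l.sum ≤ l.length * M := by
  intro l
  induction l with
  | nil => simp
  | cons b t ih =>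
    intro h
    have := ih fun a ha => h a (by simp [ha])
    have hb := h b (by simp)
    simp only [List.sum_cons, List.length_cons]
    push_cast
    nlinarith

lemma list_sum_const_add (c : ℝ) (t : ℕ → ℝ) :
    ∀ k : ℕ, ((List.range k).map (fun i => c + t i)).sum
      = k * c + ((List.range k).map t).sum := by
  intro k
  induction k with
  | zero => simp
  | succ k ih =>
    rw [List.range_succ, List.map_append, List.map_append, List.sum_append, List.sum_append, ih]
    push_cast
    simp
    ring

lemma sum_image_le {α β : Type*} [DecidableEq β] (s : Finset α) (f : α → β) (g : β → ℝ)
    (hg : ∀ b, 0 ≤ g b) : ∑ b ∈ s.image f, g b ≤ ∑ a ∈ s, g (f a) := by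
  classical
  induction s using Finset.induction_on with
  | empty => simp
  | insert _ _ ha ih =>
    rename_i a s
    rw [Finset.image_insert, Finset.sum_insert ha]
    by_cases hfa : f a ∈ s.image f
    · rw [Finset.insert_eq_self.2 hfa]
      have := hg (f a)
      linarith
    · rw [Finset.sum_insert hfa]
      linarith

lemma tails_eq {α : Type*} (l : List α) :
    l.tails = (List.range (l.length + 1)).map (fun i => l.drop i) := by
  induction l with
  | nil => rfl
  | cons a t ih =>
    rw [List.tails_cons, ih, List.length_cons]
    simp [List.range_succ_eq_map, List.map_map, Function.comp_def, Nat.succ_eq_add_one]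

end AuxGeneral

section AuxBowen

variable {X : Type*} {ι : Type*} [PseudoMetricSpace X]

lemma bowenDist_eq (f : ι → X → X) (l : List ι) (x y : X) :
    bowenDist f l x y = ((List.range (l.length + 1)).map
      (fun i => dist (wordMap f (l.drop i) x) (wordMap f (l.drop i) y))).foldr max 0 := by
  rw [bowenDist, tails_eq, List.map_map]
  rfl

lemma birkhoff_eq (f : ι → X → X) (φ : X → ℝ) (l : List ι) (x : X) :
    birkhoff f φ l x = ((List.range l.length).map
      (fun i => φ (wordMap f (l.drop (i + 1)) x))).sum := by
  rw [birkhoff, tails_eq, List.range_succ_eq_map, List.map_cons, List.tail_cons,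
    List.map_map, List.map_map]
  rfl

lemma bowenDist_nonneg (f : ι → X → X) (l : List ι) (x y : X) : 0 ≤ bowenDist f l x y :=
  foldr_max_nonneg _

lemma bowenDist_self (f : ι → X → X) (l : List ι) (x : X) : bowenDist f l x x = 0 := by
  refine le_antisymm (foldr_max_le le_rfl ?_) (bowenDist_nonneg f l x x)
  rintro a ha
  rw [List.mem_map] at ha
  obtain ⟨w', -, rfl⟩ := ha
  simp

lemma bowenDist_comm (f : ι → X → X) (l : List ι) (x y : X) :
    bowenDist f l x y = bowenDist f l y x := by
  unfold bowenDist
  congr 1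
  apply List.map_congr_left
  intro w' _
  exact dist_comm _ _

lemma bowenDist_triangle (f : ι → X → X) (l : List ι) (x y z : X) :
    bowenDist f l x z ≤ bowenDist f l x y + bowenDist f l y z := by
  refine foldr_max_le (add_nonneg (bowenDist_nonneg f l x y) (bowenDist_nonneg f l y z)) ?_
  rintro a ha
  rw [List.mem_map] at ha
  obtain ⟨w', hw', rfl⟩ := ha
  calc dist (wordMap f w' x) (wordMap f w' z)
      ≤ dist (wordMap f w' x) (wordMap f w' y) + dist (wordMap f w' y) (wordMap f w' z) :=
        dist_triangle _ _ _
    _ ≤ bowenDist f l x y + bowenDist f l y z := by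
        gcongr <;> exact le_foldr_max (List.mem_map_of_mem hw')

lemma term_le_bowenDist (f : ι → X → X) (l : List ι) {i : ℕ} (hi : i ≤ l.length) (x y : X) :
    dist (wordMap f (l.drop i) x) (wordMap f (l.drop i) y) ≤ bowenDist f l x y := by
  rw [bowenDist_eq]
  exact le_foldr_max (List.mem_map_of_mem (List.mem_range.2 (by omega)))

lemma continuous_wordMap {f : ι → X → X} (hf : ∀ i, Continuous (f i)) (l : List ι) :
    Continuous (wordMap f l) := by
  induction l with
  | nil => exact continuous_id
  | cons a t ih => exact (hf a).comp ih

lemma continuous_foldr_max {Y α : Type*} [TopologicalSpace Y] (g : α → Y → ℝ) (ws : List α)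
    (h : ∀ a, Continuous (g a)) :
    Continuous fun y : Y => (ws.map fun a => g a y).foldr max 0 := by
  induction ws with
  | nil => simpa using continuous_const
  | cons a t ih => exact (h a).max ih

lemma continuous_bowenDist {f : ι → X → X} (hf : ∀ i, Continuous (f i)) (l : List ι) (y : X) :
    Continuous fun x => bowenDist f l x y := by
  unfold bowenDist
  exact continuous_foldr_max (fun w' x => dist (wordMap f w' x) (wordMap f w' y)) l.tails
    (fun w' => (continuous_wordMap hf w').dist continuous_const)

end AuxBowen
section AuxSpan

variable {X : Type*} {ι : Type*} [PseudoMetricSpace X]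

lemma exists_spanningSet [CompactSpace X] {f : ι → X → X} (hf : ∀ i, Continuous (f i))
    (l : List ι) {ε : ℝ} (hε : 0 < ε) : ∃ E : Finset X, IsSpanningSet f l ε E := by
  have hopen : ∀ y : X, IsOpen {x | bowenDist f l x y < ε} :=
    fun y => isOpen_lt (continuous_bowenDist hf l y) continuous_const
  have hcov : (Set.univ : Set X) ⊆ ⋃ y : X, {x | bowenDist f l x y < ε} := by
    intro x _
    exact Set.mem_iUnion.2 ⟨x, by simpa [bowenDist_self f l x] using hε⟩
  obtain ⟨t, ht⟩ := isCompact_univ.elim_finite_subcover _ hopen hcov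
  refine ⟨t, fun x => ?_⟩
  have := ht (Set.mem_univ x)
  rw [Set.mem_iUnion₂] at this
  obtain ⟨y, hy, hxy⟩ := this
  exact ⟨y, hy, hxy⟩

lemma card_le_of_sep_span {f : ι → X → X} {l : List ι} {ε : ℝ}
    {E S : Finset X} (hE : IsSeparatedSet f l ε E) (hS : IsSpanningSet f l (ε / 2) S) :
    E.card ≤ S.card := by
  classical
  choose y hy hylt using hS
  apply Finset.card_le_card_of_injOn y (fun x _ => hy x)
  intro x₁ h₁ x₂ h₂ hxy
  by_contra hne
  have hsep := hE x₁ h₁ x₂ h₂ hne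
  have h3 : bowenDist f l x₁ x₂ ≤ bowenDist f l x₁ (y x₁) + bowenDist f l (y x₁) x₂ :=
    bowenDist_triangle f l _ _ _
  have h4 : bowenDist f l (y x₁) x₂ = bowenDist f l x₂ (y x₂) := by
    rw [bowenDist_comm, hxy]
  linarith [hylt x₁, hylt x₂]

lemma birkhoff_le {f : ι → X → X} {φ : X → ℝ} {M : ℝ} (hM : ∀ x, φ x ≤ M)
    (l : List ι) (x : X) : birkhoff f φ l x ≤ l.length * M := by
  rw [birkhoff]
  have h := list_sum_le (M := M) (l := l.tails.tail.map fun w' => φ (wordMap f w' x)) ?_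
  · simpa using h
  · rintro a ha
    rw [List.mem_map] at ha
    obtain ⟨w', -, rfl⟩ := ha
    exact hM _

lemma sum_exp_le {f : ι → X → X} {φ : X → ℝ} {M : ℝ} (hM : ∀ x, φ x ≤ M)
    (l : List ι) (E : Finset X) :
    ∑ x ∈ E, Real.exp (birkhoff f φ l x) ≤ E.card * Real.exp (l.length * M) := by
  have := Finset.sum_le_card_nsmul E (fun x => Real.exp (birkhoff f φ l x))
    (Real.exp (l.length * M)) (fun x _ => Real.exp_le_exp.2 (birkhoff_le hM l x))
  simpa [nsmul_eq_mul] using this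

lemma pword_bddAbove {f : ι → X → X} {φ : X → ℝ} (l : List ι) {ε : ℝ}
    {S : Finset X} (hS : IsSpanningSet f l (ε / 2) S) {M : ℝ} (hM : ∀ x, φ x ≤ M) :
    BddAbove {s : ℝ | ∃ E : Finset X, IsSeparatedSet f l ε E ∧
      s = ∑ x ∈ E, Real.exp (birkhoff f φ l x)} := by
  refine ⟨S.card * Real.exp (l.length * M), ?_⟩
  rintro s ⟨E, hE, rfl⟩
  calc ∑ x ∈ E, Real.exp (birkhoff f φ l x)
      ≤ E.card * Real.exp (l.length * M) := sum_exp_le hM l E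
    _ ≤ S.card * Real.exp (l.length * M) :=
        mul_le_mul_of_nonneg_right (Nat.cast_le.2 (card_le_of_sep_span hE hS))
          (Real.exp_pos _).le

lemma le_Pword {f : ι → X → X} {φ : X → ℝ} {l : List ι} {ε : ℝ}
    (hbdd : BddAbove {s : ℝ | ∃ E : Finset X, IsSeparatedSet f l ε E ∧
      s = ∑ x ∈ E, Real.exp (birkhoff f φ l x)})
    {E : Finset X} (hE : IsSeparatedSet f l ε E) :
    ∑ x ∈ E, Real.exp (birkhoff f φ l x) ≤ Pword f φ l ε :=
  le_csSup hbdd ⟨E, hE, rfl⟩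

lemma Pword_exists {f : ι → X → X} {φ : X → ℝ} {l : List ι} {ε : ℝ}
    (hbdd : BddAbove {s : ℝ | ∃ E : Finset X, IsSeparatedSet f l ε E ∧
      s = ∑ x ∈ E, Real.exp (birkhoff f φ l x)})
    {δ : ℝ} (hδ : 0 < δ) :
    ∃ E : Finset X, IsSeparatedSet f l ε E ∧
      Pword f φ l ε - δ < ∑ x ∈ E, Real.exp (birkhoff f φ l x) := by
  have hne : {s : ℝ | ∃ E : Finset X, IsSeparatedSet f l ε E ∧
      s = ∑ x ∈ E, Real.exp (birkhoff f φ l x)}.Nonempty :=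
    ⟨0, ∅, fun x hx => absurd hx (by simp), by simp⟩
  have hlt : Pword f φ l ε - δ < Pword f φ l ε := sub_lt_self _ hδ
  obtain ⟨s, ⟨E, hE, rfl⟩, hs⟩ := exists_lt_of_lt_csSup hne hlt
  exact ⟨E, hE, hs⟩

lemma qword_bddBelow (f : ι → X → X) (φ : X → ℝ) (l : List ι) (ε : ℝ) :
    BddBelow {s : ℝ | ∃ E : Finset X, IsSpanningSet f l ε E ∧
      s = ∑ x ∈ E, Real.exp (birkhoff f φ l x)} := by
  refine ⟨0, ?_⟩
  rintro s ⟨E, -, rfl⟩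
  exact Finset.sum_nonneg fun x _ => (Real.exp_pos _).le

lemma Qword_le {f : ι → X → X} {φ : X → ℝ} {l : List ι} {ε : ℝ}
    {E : Finset X} (hE : IsSpanningSet f l ε E) :
    Qword f φ l ε ≤ ∑ x ∈ E, Real.exp (birkhoff f φ l x) :=
  csInf_le (qword_bddBelow f φ l ε) ⟨E, hE, rfl⟩

lemma Qword_exists [CompactSpace X] {f : ι → X → X} (hf : ∀ i, Continuous (f i))
    {φ : X → ℝ} (l : List ι) {ε : ℝ} (hε : 0 < ε) {δ : ℝ} (hδ : 0 < δ) :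
    ∃ E : Finset X, IsSpanningSet f l ε E ∧
      ∑ x ∈ E, Real.exp (birkhoff f φ l x) < Qword f φ l ε + δ := by
  obtain ⟨E0, hE0⟩ := exists_spanningSet hf l hε
  have hne : {s : ℝ | ∃ E : Finset X, IsSpanningSet f l ε E ∧
      s = ∑ x ∈ E, Real.exp (birkhoff f φ l x)}.Nonempty := ⟨_, E0, hE0, rfl⟩
  obtain ⟨s, ⟨E, hE, rfl⟩, hs⟩ := Real.lt_sInf_add_pos hne hδ
  exact ⟨E, hE, hs⟩

end AuxSpan
section AuxSkew

variable {X : Type*} [MetricSpace X] {m : ℕ}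

/-- The skew product `F(ω,x) = (σω, f_{ω₀}(x))`. -/
def skew (f : Fin m → X → X) : SigmaSpace m × X → SigmaSpace m × X :=
  fun p => (shift m p.1, f (p.1 0) p.2)

/-- The word read off the first `j` symbols of `ω` (most recent symbol first). -/
def wrd (ω : SigmaSpace m) : ℕ → List (Fin m)
  | 0 => []
  | j + 1 => ω (j : ℤ) :: wrd ω j

lemma shift_iter (j : ℕ) : ∀ (ω : SigmaSpace m) (i : ℤ), (shift m)^[j] ω i = ω (i + j) := by
  induction j with
  | zero => intro ω i; simp
  | succ k ih =>
    intro ω i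
    rw [Function.iterate_succ_apply, ih]
    show ω (i + k + 1) = ω (i + (k + 1 : ℕ))
    congr 1
    push_cast
    ring

lemma wordMap_const {Y : Type*} (T : Y → Y) (l : List (Fin 1)) :
    wordMap (fun _ : Fin 1 => T) l = T^[l.length] := by
  induction l with
  | nil => rfl
  | cons a t ih =>
    show T ∘ wordMap (fun _ : Fin 1 => T) t = _
    rw [ih, List.length_cons, Function.iterate_succ']

lemma skew_iter (f : Fin m → X → X) (j : ℕ) (ω : SigmaSpace m) (x : X) :
    (skew f)^[j] (ω, x) = ((shift m)^[j] ω, wordMap f (wrd ω j) x) := by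
  induction j with
  | zero => rfl
  | succ k ih =>
    rw [Function.iterate_succ_apply', ih]
    show (_, f ((shift m)^[k] ω 0) _) = _
    rw [shift_iter, ← Function.iterate_succ_apply' (shift m)]
    show (_, f (ω (0 + k)) _) = ((shift m)^[k+1] ω, wordMap f (ω (k : ℤ) :: wrd ω k) x)
    rw [zero_add]
    rfl

/-- `ω` built from the word `l` (on positions `0,…,|l|-1`, with the last letter of `l`
at position `0`), from `b` on positions `≥ |l|` and from `a` on negative positions. -/
def omg (d : Fin m) (l : List (Fin m)) (a b : ℕ → Fin m) : SigmaSpace m :=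
  fun i => if 0 ≤ i then
      (if i < l.length then l.reverse.getD i.toNat d else b (i.toNat - l.length))
    else a (-i - 1).toNat

lemma omg_natCast (d : Fin m) (l : List (Fin m)) (a b : ℕ → Fin m) (j : ℕ)
    (hj : j < l.length) :
    omg d l a b (j : ℤ) = l.reverse.getD j d := by
  unfold omg
  rw [if_pos (Int.natCast_nonneg j), if_pos (by exact_mod_cast hj)]
  simp

lemma omg_neg (d : Fin m) (l : List (Fin m)) (a b : ℕ → Fin m) (i : ℤ) (hi : i < 0) :
    omg d l a b i = a (-i - 1).toNat := by
  unfold omg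
  rw [if_neg (by omega)]

lemma omg_ge (d : Fin m) (l : List (Fin m)) (a b : ℕ → Fin m) (i : ℤ)
    (hi : (l.length : ℤ) ≤ i) :
    omg d l a b i = b (i.toNat - l.length) := by
  unfold omg
  rw [if_pos (by omega), if_neg (by omega)]

lemma wrd_omg (d : Fin m) (l : List (Fin m)) (a b : ℕ → Fin m) :
    ∀ j, j ≤ l.length → wrd (omg d l a b) j = l.drop (l.length - j) := by
  intro j
  induction j with
  | zero => intro _; simp [wrd, List.drop_length]
  | succ k ih =>
    intro hk
    have h1 : l.length - (k + 1) < l.length := by omega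
    rw [wrd, ih (by omega), List.drop_eq_getElem_cons h1]
    have h2 : l.length - (k + 1) + 1 = l.length - k := by omega
    rw [h2]
    congr 1
    rw [omg_natCast d l a b k (by omega),
      List.getD_eq_getElem _ _ (by simpa using by omega : k < l.reverse.length),
      List.getElem_reverse]
    congr 1
    omega

lemma wrd_congr {ω ω' : SigmaSpace m} :
    ∀ j : ℕ, (∀ i : ℕ, i < j → ω (i : ℤ) = ω' (i : ℤ)) → wrd ω j = wrd ω' j := by
  intro j
  induction j with
  | zero => intro _; rfl
  | succ k ih =>
    intro h
    rw [wrd, wrd, h k (by omega), ih fun i hi => h i (by omega)]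

lemma omg_inj (d : Fin m) (a b : ℕ → Fin m) {l l' : List (Fin m)}
    (hlen : l.length = l'.length) (h : omg d l a b = omg d l' a b) : l = l' := by
  have hrev : l.reverse = l'.reverse := by
    apply List.ext_getElem (by simpa using hlen)
    intro j hj hj'
    have hjl : j < l.length := by simpa using hj
    have e1 := omg_natCast d l a b j hjl
    have e2 := omg_natCast d l' a b j (by omega)
    rw [h] at e1
    rw [e1] at e2
    rw [List.getD_eq_getElem _ _ hj, List.getD_eq_getElem _ _ hj'] at e2
    exact e2
  simpa using congrArg List.reverse hrev

lemma dist_sigma (ω ω' : SigmaSpace m) : dist ω ω' = sdist m ω ω' := rfl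

lemma sdist_le_of_agree {N : ℕ} {ω ω' : SigmaSpace m}
    (h : ∀ p : ℤ, ω p ≠ ω' p → N ≤ p.natAbs) :
    sdist m ω ω' ≤ (1 / 2 : ℝ) ^ N := by
  unfold sdist
  split
  · positivity
  · rename_i hne
    apply pow_le_pow_of_le_one (by norm_num) (by norm_num)
    apply le_csInf
    · obtain ⟨p, hp⟩ := Function.ne_iff.mp hne
      exact ⟨p.natAbs, p, rfl, hp⟩
    · rintro k ⟨p, rfl, hp⟩
      exact h p hp

lemma sdist_eq_one {ω ω' : SigmaSpace m} (h : ω 0 ≠ ω' 0) : sdist m ω ω' = 1 := by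
  unfold sdist
  split
  · rename_i he; exact absurd (congrFun he 0) h
  have h0 : sInf {k : ℕ | ∃ n : ℤ, n.natAbs = k ∧ ω n ≠ ω' n} = 0 :=
    Nat.sInf_eq_zero.2 (Or.inl ⟨0, rfl, h⟩)
  simp [h0]

end AuxSkew
section AuxSkew2

variable {X : Type*} [MetricSpace X] {m : ℕ}

lemma skew_birkhoff (f : Fin m → X → X) (c : ℝ) (φ : X → ℝ) (l1 : List (Fin 1))
    (ω : SigmaSpace m) (x : X) (l : List (Fin m)) (hlen : l1.length = l.length)
    (hw : ∀ j ≤ l.length, wrd ω j = l.drop (l.length - j)) :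
    birkhoff (fun _ : Fin 1 => skew f) (fun p => c + φ p.2) l1 (ω, x)
      = l.length * c + birkhoff f φ l x := by
  rw [birkhoff_eq, birkhoff_eq, hlen]
  have key : ∀ i ∈ List.range l.length,
      (fun i => (fun p : SigmaSpace m × X => c + φ p.2)
        (wordMap (fun _ : Fin 1 => skew f) (l1.drop (i + 1)) (ω, x))) i
      = (fun i => c + φ (wordMap f (l.drop (i + 1)) x)) i := by
    intro i hi
    rw [List.mem_range] at hi
    dsimp only
    rw [wordMap_const, List.length_drop, hlen, skew_iter, hw _ (by omega)]
    have h2 : l.length - (l.length - (i + 1)) = i + 1 := by omega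
    rw [h2]
  rw [List.map_congr_left key, list_sum_const_add]

lemma skew_bowen_eq (f : Fin m → X → X) (l1 : List (Fin 1)) (ω : SigmaSpace m) (x y : X)
    (l : List (Fin m)) (hlen : l1.length = l.length)
    (hw : ∀ j ≤ l.length, wrd ω j = l.drop (l.length - j)) :
    bowenDist (fun _ : Fin 1 => skew f) l1 (ω, x) (ω, y) = bowenDist f l x y := by
  rw [bowenDist_eq, bowenDist_eq, hlen]
  congr 1
  apply List.map_congr_left
  intro i hi
  rw [List.mem_range] at hi
  rw [wordMap_const, List.length_drop, hlen, skew_iter, skew_iter, hw _ (by omega)]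
  have h2 : l.length - (l.length - i) = i := by omega
  rw [h2, Prod.dist_eq, dist_sigma, sdist_self]
  exact max_eq_right dist_nonneg

lemma skew_bowen_ge (f : Fin m → X → X) (l1 : List (Fin 1)) (ω ω' : SigmaSpace m)
    (x y : X) (p : ℕ) (hp : p < l1.length) (hne : ω (p : ℤ) ≠ ω' (p : ℤ)) :
    (1 : ℝ) ≤ bowenDist (fun _ : Fin 1 => skew f) l1 (ω, x) (ω', y) := by
  rw [bowenDist_eq]
  have hmem : (l1.length - p) ∈ List.range (l1.length + 1) := List.mem_range.2 (by omega)
  refine le_trans ?_ (le_foldr_max (List.mem_map_of_mem hmem))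
  rw [wordMap_const, List.length_drop, skew_iter, skew_iter, Prod.dist_eq]
  refine le_trans ?_ (le_max_left _ _)
  rw [dist_sigma, sdist_eq_one ?_]
  intro h
  apply hne
  dsimp only at h
  rw [shift_iter, shift_iter, zero_add] at h
  have h3 : l1.length - (l1.length - p) = p := by omega
  rw [h3] at h
  exact h

lemma omg_ofFn_val' (d : Fin m) {n : ℕ} (v : Fin n → Fin m) (a b : ℕ → Fin m)
    (j : ℕ) (hj : j < n) :
    omg d (List.ofFn v) a b (j : ℤ) = v ⟨n - 1 - j, by omega⟩ := by
  rw [omg_natCast d _ a b _ (by simpa using hj)]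
  rw [List.getD_eq_getElem _ _ (by simpa using hj)]
  rw [List.getElem_reverse, List.getElem_ofFn]
  congr 1
  apply Fin.ext
  simp

lemma Pn_one {Y : Type*} [PseudoMetricSpace Y] (F : Y → Y) (g : Y → ℝ) (n : ℕ) (ε : ℝ) :
    Pn (fun _ : Fin 1 => F) g n ε
      = Pword (fun _ : Fin 1 => F) g (List.ofFn fun _ : Fin n => (0 : Fin 1)) ε := by
  classical
  rw [Pn]
  have h1 : (Finset.univ : Finset (Fin n → Fin 1)) = {fun _ => 0} :=
    Finset.eq_singleton_iff_unique_mem.2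
      ⟨Finset.mem_univ _, fun w _ => funext fun i => Subsingleton.elim _ _⟩
  rw [h1, Finset.sum_singleton]
  simp

lemma Qn_one {Y : Type*} [PseudoMetricSpace Y] (F : Y → Y) (g : Y → ℝ) (n : ℕ) (ε : ℝ) :
    Qn (fun _ : Fin 1 => F) g n ε
      = Qword (fun _ : Fin 1 => F) g (List.ofFn fun _ : Fin n => (0 : Fin 1)) ε := by
  classical
  rw [Qn]
  have h1 : (Finset.univ : Finset (Fin n → Fin 1)) = {fun _ => 0} :=
    Finset.eq_singleton_iff_unique_mem.2
      ⟨Finset.mem_univ _, fun w _ => funext fun i => Subsingleton.elim _ _⟩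
  rw [h1, Finset.sum_singleton]
  simp

end AuxSkew2
section AuxConstruct

variable {X : Type*} [MetricSpace X] {m : ℕ}

lemma skew_sep_sum (hm : 0 < m) (f : Fin m → X → X) (φ : X → ℝ) (c : ℝ) (n : ℕ)
    {ε : ℝ} (hε1 : ε ≤ 1)
    (E : (Fin n → Fin m) → Finset X)
    (hE : ∀ v, IsSeparatedSet f (List.ofFn v) ε (E v)) :
    ∃ S : Finset (SigmaSpace m × X),
      IsSeparatedSet (fun _ : Fin 1 => skew f) (List.ofFn fun _ : Fin n => (0 : Fin 1)) ε S ∧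
      ∑ p ∈ S, Real.exp (birkhoff (fun _ : Fin 1 => skew f) (fun p => c + φ p.2)
          (List.ofFn fun _ : Fin n => (0 : Fin 1)) p)
        = Real.exp (n * c) *
            ∑ v : Fin n → Fin m, ∑ x ∈ E v, Real.exp (birkhoff f φ (List.ofFn v) x) := by
  classical
  set d : Fin m := ⟨0, hm⟩ with hd
  set l1 : List (Fin 1) := List.ofFn fun _ : Fin n => (0 : Fin 1) with hl1
  have hl1len : l1.length = n := List.length_ofFn
  have hlen : ∀ v : Fin n → Fin m, (List.ofFn v).length = n := fun v => List.length_ofFn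
  set ψ : (Σ _ : Fin n → Fin m, X) → SigmaSpace m × X :=
    fun q => (omg d (List.ofFn q.1) (fun _ => d) (fun _ => d), q.2) with hψ
  set J : Finset (Σ _ : Fin n → Fin m, X) := Finset.univ.sigma fun v => E v with hJ
  have hinj : ∀ q ∈ J, ∀ q' ∈ J, ψ q = ψ q' → q = q' := by
    rintro ⟨v, x⟩ - ⟨v', x'⟩ - heq
    have hx : x = x' := congrArg Prod.snd heq
    have hω : omg d (List.ofFn v) (fun _ => d) (fun _ => d)
        = omg d (List.ofFn v') (fun _ => d) (fun _ => d) := congrArg Prod.fst heq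
    have hv : v = v' :=
      List.ofFn_injective (omg_inj d _ _ (by rw [hlen, hlen]) hω)
    subst hx; subst hv; rfl
  refine ⟨J.image ψ, ?_, ?_⟩
  · rintro p hp q hq hpq
    rw [Finset.mem_image] at hp hq
    obtain ⟨⟨v, x⟩, hv, rfl⟩ := hp
    obtain ⟨⟨v', x'⟩, hv', rfl⟩ := hq
    rw [hJ, Finset.mem_sigma] at hv hv'
    by_cases hvv : v = v'
    · subst hvv
      have hxx : x ≠ x' := fun h => hpq (by rw [hψ]; dsimp only; rw [h])
      calc ε ≤ bowenDist f (List.ofFn v) x x' := hE v x hv.2 x' hv'.2 hxx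
        _ = bowenDist (fun _ : Fin 1 => skew f) l1 (ψ ⟨v, x⟩) (ψ ⟨v, x'⟩) := by
            rw [hψ]; dsimp only
            rw [skew_bowen_eq f l1 _ x x' (List.ofFn v) (by rw [hl1len, hlen])
              (wrd_omg d _ _ _)]
    · obtain ⟨j, hj⟩ := Function.ne_iff.mp hvv
      refine le_trans hε1 ?_
      have hjn : (j : ℕ) < n := j.2
      refine skew_bowen_ge f l1 _ _ x x' (n - 1 - (j : ℕ)) (by omega) ?_
      dsimp only
      rw [omg_ofFn_val' d v _ _ _ (by omega), omg_ofFn_val' d v' _ _ _ (by omega)]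
      intro hcon
      apply hj
      have h5 : (⟨n - 1 - (n - 1 - (j : ℕ)), by omega⟩ : Fin n) = j := by
        apply Fin.ext; simp; omega
      rw [h5] at hcon
      exact hcon
  · rw [Finset.sum_image hinj, hJ, Finset.sum_sigma, Finset.mul_sum]
    apply Finset.sum_congr rfl
    intro v _
    rw [Finset.mul_sum]
    apply Finset.sum_congr rfl
    intro x _
    rw [hψ]; dsimp only
    rw [skew_birkhoff f c φ l1 _ x (List.ofFn v) (by rw [hl1len, hlen]) (wrd_omg d _ _ _),
      hlen, Real.exp_add]


lemma skew_span_sum (hm : 0 < m) (f : Fin m → X → X) (φ : X → ℝ) (c : ℝ) (n N : ℕ)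
    {ε : ℝ} (hε : 0 < ε) (hN : ((1 : ℝ) / 2) ^ N < ε)
    (Esp : (Fin n → Fin m) → Finset X)
    (hEsp : ∀ v, IsSpanningSet f (List.ofFn v) ε (Esp v)) :
    ∃ S : Finset (SigmaSpace m × X),
      IsSpanningSet (fun _ : Fin 1 => skew f) (List.ofFn fun _ : Fin n => (0 : Fin 1)) ε S ∧
      ∑ p ∈ S, Real.exp (birkhoff (fun _ : Fin 1 => skew f) (fun p => c + φ p.2)
          (List.ofFn fun _ : Fin n => (0 : Fin 1)) p)
        ≤ (m : ℝ) ^ (2 * N) * Real.exp (n * c) *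
            ∑ v : Fin n → Fin m, ∑ x ∈ Esp v, Real.exp (birkhoff f φ (List.ofFn v) x) := by
  classical
  set d : Fin m := ⟨0, hm⟩ with hd
  set l1 : List (Fin 1) := List.ofFn fun _ : Fin n => (0 : Fin 1) with hl1
  have hl1len : l1.length = n := List.length_ofFn
  have hlen : ∀ v : Fin n → Fin m, (List.ofFn v).length = n := fun v => List.length_ofFn
  set ext : (Fin N → Fin m) → ℕ → Fin m :=
    (fun u j => if h : j < N then u ⟨j, h⟩ else d) with hext
  set ψ : (Σ _ : (Fin n → Fin m) × (Fin N → Fin m) × (Fin N → Fin m), X) → SigmaSpace m × X :=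
    fun q => (omg d (List.ofFn q.1.1) (ext q.1.2.1) (ext q.1.2.2), q.2) with hψ
  set J : Finset (Σ _ : (Fin n → Fin m) × (Fin N → Fin m) × (Fin N → Fin m), X) :=
    Finset.univ.sigma fun i => Esp i.1 with hJ
  refine ⟨J.image ψ, ?_, ?_⟩
  · rintro ⟨ω, x⟩
    set v : Fin n → Fin m := fun i => ω ((n - 1 - (i : ℕ) : ℕ) : ℤ) with hv
    set u1 : Fin N → Fin m := fun j => ω (-1 - (j : ℕ)) with hu1
    set u2 : Fin N → Fin m := fun j => ω ((n : ℤ) + (j : ℕ)) with hu2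
    set ω' : SigmaSpace m := omg d (List.ofFn v) (ext u1) (ext u2) with hω'
    have hagree : ∀ i : ℤ, -(N : ℤ) ≤ i → i < (n : ℤ) + N → ω' i = ω i := by
      intro i h1 h2
      by_cases hi : i < 0
      · rw [hω', omg_neg _ _ _ _ _ hi, hext]
        dsimp only
        rw [dif_pos (show (-i - 1).toNat < N by omega), hu1]
        dsimp only
        congr 1
        omega
      · push_neg at hi
        by_cases hin : i < (n : ℤ)
        · have hji : ((i.toNat : ℕ) : ℤ) = i := Int.toNat_of_nonneg hi
          rw [hω', ← hji, omg_ofFn_val' d v _ _ _ (by omega), hv]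
          dsimp only
          congr 1
          omega
        · push_neg at hin
          rw [hω', omg_ge _ _ _ _ _ (by rw [hlen]; omega), hext]
          dsimp only
          rw [hlen, dif_pos (show i.toNat - n < N by omega), hu2]
          dsimp only
          congr 1
          omega
    obtain ⟨y, hyE, hylt⟩ := hEsp v x
    refine ⟨(ω', y), Finset.mem_image.2 ⟨⟨(v, u1, u2), y⟩,
      Finset.mem_sigma.2 ⟨Finset.mem_univ _, hyE⟩, rfl⟩, ?_⟩
    rw [bowenDist_eq, hl1len]
    apply foldr_max_lt hε
    rintro a ha
    rw [List.mem_map] at ha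
    obtain ⟨i, hi, rfl⟩ := ha
    rw [List.mem_range] at hi
    rw [wordMap_const, List.length_drop, hl1len, skew_iter, skew_iter, Prod.dist_eq]
    apply max_lt
    · rw [dist_sigma]
      refine lt_of_le_of_lt (sdist_le_of_agree ?_) hN
      intro p hp
      dsimp only at hp
      rw [shift_iter, shift_iter] at hp
      by_contra hcon
      push_neg at hcon
      exact hp (hagree _ (by omega) (by omega)).symm
    · have e1 : wrd ω (n - i) = wrd ω' (n - i) :=
        wrd_congr (n - i) fun k hk => (hagree (k : ℤ) (by omega) (by omega)).symm
      rw [e1, hω', wrd_omg d _ _ _ _ (by rw [hlen]; omega)]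
      have h2 : (List.ofFn v).length - (n - i) = i := by rw [hlen]; omega
      rw [h2]
      exact lt_of_le_of_lt (term_le_bowenDist f _ (by rw [hlen]; omega) x y) hylt
  · refine le_trans (sum_image_le J ψ _ (fun p => (Real.exp_pos _).le)) ?_
    rw [hJ, Finset.sum_sigma]
    have key : ∀ (i : (Fin n → Fin m) × (Fin N → Fin m) × (Fin N → Fin m)) (x : X),
        Real.exp (birkhoff (fun _ : Fin 1 => skew f) (fun p => c + φ p.2) l1 (ψ ⟨i, x⟩))
          = Real.exp ((n : ℝ) * c) * Real.exp (birkhoff f φ (List.ofFn i.1) x) := by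
      intro i x
      rw [hψ]; dsimp only
      rw [skew_birkhoff f c φ l1 _ x (List.ofFn i.1) (by rw [hl1len, hlen]) (wrd_omg d _ _ _),
        hlen, Real.exp_add]
    have step1 : ∑ i : (Fin n → Fin m) × (Fin N → Fin m) × (Fin N → Fin m),
        ∑ x ∈ Esp i.1, Real.exp (birkhoff (fun _ : Fin 1 => skew f)
          (fun p => c + φ p.2) l1 (ψ ⟨i, x⟩))
        = ∑ i : (Fin n → Fin m) × (Fin N → Fin m) × (Fin N → Fin m),
          Real.exp ((n : ℝ) * c) * ∑ x ∈ Esp i.1, Real.exp (birkhoff f φ (List.ofFn i.1) x) := by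
      refine Finset.sum_congr rfl fun i _ => ?_
      rw [Finset.mul_sum]
      exact Finset.sum_congr rfl fun x _ => key i x
    rw [step1]
    apply le_of_eq
    rw [Fintype.sum_prod_type]
    have step2 : ∀ v : Fin n → Fin m,
        ∑ _u : (Fin N → Fin m) × (Fin N → Fin m),
          Real.exp ((n : ℝ) * c) * ∑ x ∈ Esp v, Real.exp (birkhoff f φ (List.ofFn v) x)
        = (m : ℝ) ^ (2 * N) *
            (Real.exp ((n : ℝ) * c) * ∑ x ∈ Esp v, Real.exp (birkhoff f φ (List.ofFn v) x)) := by
      intro v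
      rw [Finset.sum_const, Finset.card_univ, nsmul_eq_mul]
      congr 1
      push_cast [Fintype.card_prod, Fintype.card_fun, Fintype.card_fin]
      rw [two_mul, pow_add]
    rw [Finset.sum_congr rfl fun v _ => step2 v]
    conv_rhs => rw [Finset.mul_sum]
    refine Finset.sum_congr rfl fun v _ => ?_
    ring

end AuxConstruct

/-- For the skew product `F(ω,x) = (σω, f_{ω₀}(x))` and
`g(ω,x) = c + φ(x)`: (a) for every `n` and every `0 < ε < 1/2`,
`P_n(F,g,ε) ≥ e^{nc} mⁿ P_n(f₀,…,f_{m-1},φ,ε)`; (b) for every `ε > 0` there is `K(ε) > 0`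
with `Q_n(F,g,ε) ≤ K(ε) e^{nc} mⁿ Q_n(f₀,…,f_{m-1},φ,ε)` for all `n`.
Here the partition sums of the single transformation `F` are realized as those of the free
semigroup action with the one generator `F`. -/
theorem stmt_18 {X : Type*} [MetricSpace X] [CompactSpace X] [Nonempty X]
    {m : ℕ} (hm : 0 < m)
    (f : Fin m → X → X) (hf : ∀ i, Continuous (f i))
    (φ : X → ℝ) (hφ : Continuous φ) (c : ℝ)
    (F : SigmaSpace m × X → SigmaSpace m × X)
    (hF : F = fun p => (shift m p.1, f (p.1 0) p.2))
    (g : SigmaSpace m × X → ℝ) (hg : g = fun p => c + φ p.2) :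
    (∀ (n : ℕ) (ε : ℝ), 0 < ε → ε < 1 / 2 →
      Real.exp ((n : ℝ) * c) * (m : ℝ) ^ n * Pn f φ n ε ≤ Pn (fun _ : Fin 1 => F) g n ε) ∧
    (∀ ε : ℝ, 0 < ε → ∃ K : ℝ, 0 < K ∧ ∀ n : ℕ,
      Qn (fun _ : Fin 1 => F) g n ε ≤
        K * Real.exp ((n : ℝ) * c) * (m : ℝ) ^ n * Qn f φ n ε) := by
  subst hF hg
  obtain ⟨M, hM⟩ : ∃ M, ∀ x, φ x ≤ M := by
    obtain ⟨xM, -, hxM⟩ := isCompact_univ.exists_isMaxOn Set.univ_nonempty hφ.continuousOn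
    exact ⟨φ xM, fun x => hxM (Set.mem_univ x)⟩
  have hm' : (0 : ℝ) < (m : ℝ) := Nat.cast_pos.2 hm
  have hcardfun : ∀ k : ℕ, (Fintype.card (Fin k → Fin m) : ℝ) = (m : ℝ) ^ k := fun k => by
    simp [Fintype.card_fun]
  constructor
  · intro n ε hε hε2
    suffices h : Real.exp ((n : ℝ) * c) * (m : ℝ) ^ n * Pn f φ n ε
        ≤ Pn (fun _ : Fin 1 => skew f) (fun p => c + φ p.2) n ε from h
    rw [Pn_one]
    have hbddX : ∀ v : Fin n → Fin m, BddAbove {s : ℝ | ∃ E : Finset X,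
        IsSeparatedSet f (List.ofFn v) ε E ∧
        s = ∑ x ∈ E, Real.exp (birkhoff f φ (List.ofFn v) x)} := by
      intro v
      obtain ⟨S, hS⟩ := exists_spanningSet hf (List.ofFn v) (half_pos hε)
      exact pword_bddAbove _ hS hM
    have hgM : ∀ p : SigmaSpace m × X, (fun p : SigmaSpace m × X => c + φ p.2) p ≤ c + M :=
      fun p => by dsimp only; linarith [hM p.2]
    obtain ⟨N, hN⟩ := exists_pow_lt_of_lt_one (half_pos hε) (by norm_num : (1 : ℝ) / 2 < 1)
    choose Esp hEsp using fun v : Fin n → Fin m =>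
      exists_spanningSet hf (List.ofFn v) (half_pos hε)
    obtain ⟨SF, hSF, -⟩ := skew_span_sum hm f φ c n N (half_pos hε) hN Esp hEsp
    have hbddF : BddAbove {s : ℝ | ∃ E : Finset (SigmaSpace m × X),
        IsSeparatedSet (fun _ : Fin 1 => skew f) (List.ofFn fun _ : Fin n => (0 : Fin 1)) ε E ∧
        s = ∑ p ∈ E, Real.exp (birkhoff (fun _ : Fin 1 => skew f) (fun p => c + φ p.2)
          (List.ofFn fun _ : Fin n => (0 : Fin 1)) p)} :=
      pword_bddAbove _ hSF hgM
    apply le_of_forall_pos_le_add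
    intro η hη
    have hmn : (0 : ℝ) < (m : ℝ) ^ n := by positivity
    have hexp : (0 : ℝ) < Real.exp ((n : ℝ) * c) := Real.exp_pos _
    set δ := η / (Real.exp ((n : ℝ) * c) * (m : ℝ) ^ n) with hδdef
    have hδ : 0 < δ := by positivity
    choose E hE1 hE2 using fun v : Fin n → Fin m => Pword_exists (hbddX v) hδ
    obtain ⟨S, hSsep, hSsum⟩ :=
      skew_sep_sum hm f φ c n (le_of_lt (hε2.trans_le (by norm_num))) E hE1
    have h1 : ∑ p ∈ S, Real.exp (birkhoff (fun _ : Fin 1 => skew f) (fun p => c + φ p.2)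
          (List.ofFn fun _ : Fin n => (0 : Fin 1)) p)
        ≤ Pword (fun _ : Fin 1 => skew f) (fun p => c + φ p.2)
          (List.ofFn fun _ : Fin n => (0 : Fin 1)) ε := le_Pword hbddF hSsep
    have hsum1 : ∑ v : Fin n → Fin m, Pword f φ (List.ofFn v) ε
        ≤ (∑ v : Fin n → Fin m, ∑ x ∈ E v, Real.exp (birkhoff f φ (List.ofFn v) x))
          + (m : ℝ) ^ n * δ := by
      have h2 := Finset.sum_le_sum fun v (_ : v ∈ Finset.univ) => (by linarith [hE2 v] :
        Pword f φ (List.ofFn v) ε ≤ (∑ x ∈ E v, Real.exp (birkhoff f φ (List.ofFn v) x)) + δ)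
      rw [Finset.sum_add_distrib, Finset.sum_const, Finset.card_univ, nsmul_eq_mul,
        hcardfun n] at h2
      exact h2
    simp only [Pn]
    have hcard : ((Fintype.card (Fin m) : ℝ)) = (m : ℝ) := by simp
    calc Real.exp ((n : ℝ) * c) * (m : ℝ) ^ n *
          (1 / (Fintype.card (Fin m) : ℝ) ^ n * ∑ v : Fin n → Fin m, Pword f φ (List.ofFn v) ε)
        = Real.exp ((n : ℝ) * c) * ∑ v : Fin n → Fin m, Pword f φ (List.ofFn v) ε := by
          rw [hcard]; field_simp
      _ ≤ Real.exp ((n : ℝ) * c) *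
          ((∑ v : Fin n → Fin m, ∑ x ∈ E v, Real.exp (birkhoff f φ (List.ofFn v) x))
            + (m : ℝ) ^ n * δ) := by
          exact mul_le_mul_of_nonneg_left hsum1 hexp.le
      _ = (∑ p ∈ S, Real.exp (birkhoff (fun _ : Fin 1 => skew f) (fun p => c + φ p.2)
            (List.ofFn fun _ : Fin n => (0 : Fin 1)) p))
          + Real.exp ((n : ℝ) * c) * ((m : ℝ) ^ n * δ) := by
          rw [mul_add, hSsum]
      _ = (∑ p ∈ S, Real.exp (birkhoff (fun _ : Fin 1 => skew f) (fun p => c + φ p.2)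
            (List.ofFn fun _ : Fin n => (0 : Fin 1)) p)) + η := by
          rw [hδdef]; field_simp
      _ ≤ _ + η := by linarith
  · intro ε hε
    obtain ⟨N, hN⟩ := exists_pow_lt_of_lt_one hε (by norm_num : (1 : ℝ) / 2 < 1)
    refine ⟨(m : ℝ) ^ (2 * N), by positivity, ?_⟩
    intro n
    suffices h : Qn (fun _ : Fin 1 => skew f) (fun p => c + φ p.2) n ε
        ≤ (m : ℝ) ^ (2 * N) * Real.exp ((n : ℝ) * c) * (m : ℝ) ^ n * Qn f φ n ε from h
    rw [Qn_one]
    apply le_of_forall_pos_le_add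
    intro η hη
    have hmn : (0 : ℝ) < (m : ℝ) ^ n := by positivity
    have hexp : (0 : ℝ) < Real.exp ((n : ℝ) * c) := Real.exp_pos _
    have hApos : (0 : ℝ) < (m : ℝ) ^ (2 * N) * Real.exp ((n : ℝ) * c) := by positivity
    set δ := η / ((m : ℝ) ^ (2 * N) * Real.exp ((n : ℝ) * c) * (m : ℝ) ^ n) with hδdef
    have hδ : 0 < δ := by positivity
    choose Esp h1 h2 using fun v : Fin n → Fin m => Qword_exists hf (List.ofFn v) hε hδ
    obtain ⟨S, hSspan, hSsum⟩ := skew_span_sum hm f φ c n N hε hN Esp h1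
    have hQ := Qword_le (f := fun _ : Fin 1 => skew f) (φ := fun p => c + φ p.2) hSspan
    have hsum1 : ∑ v : Fin n → Fin m, ∑ x ∈ Esp v, Real.exp (birkhoff f φ (List.ofFn v) x)
        ≤ (∑ v : Fin n → Fin m, Qword f φ (List.ofFn v) ε) + (m : ℝ) ^ n * δ := by
      have h3 := Finset.sum_le_sum fun v (_ : v ∈ Finset.univ) => (by linarith [h2 v] :
        (∑ x ∈ Esp v, Real.exp (birkhoff f φ (List.ofFn v) x)) ≤ Qword f φ (List.ofFn v) ε + δ)
      rw [Finset.sum_add_distrib, Finset.sum_const, Finset.card_univ, nsmul_eq_mul,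
        hcardfun n] at h3
      exact h3
    simp only [Qn]
    have hcard : ((Fintype.card (Fin m) : ℝ)) = (m : ℝ) := by simp
    calc Qword (fun _ : Fin 1 => skew f) (fun p => c + φ p.2)
          (List.ofFn fun _ : Fin n => (0 : Fin 1)) ε
        ≤ ∑ p ∈ S, Real.exp (birkhoff (fun _ : Fin 1 => skew f) (fun p => c + φ p.2)
            (List.ofFn fun _ : Fin n => (0 : Fin 1)) p) := hQ
      _ ≤ (m : ℝ) ^ (2 * N) * Real.exp ((n : ℝ) * c) *
            ∑ v : Fin n → Fin m, ∑ x ∈ Esp v, Real.exp (birkhoff f φ (List.ofFn v) x) := hSsum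
      _ ≤ (m : ℝ) ^ (2 * N) * Real.exp ((n : ℝ) * c) *
            ((∑ v : Fin n → Fin m, Qword f φ (List.ofFn v) ε) + (m : ℝ) ^ n * δ) :=
          mul_le_mul_of_nonneg_left hsum1 hApos.le
      _ = (m : ℝ) ^ (2 * N) * Real.exp ((n : ℝ) * c) * (m : ℝ) ^ n *
            (1 / (Fintype.card (Fin m) : ℝ) ^ n * ∑ v : Fin n → Fin m, Qword f φ (List.ofFn v) ε)
          + η := by
          rw [hcard, hδdef]; field_simp
      _ ≤ _ + η := le_rfl

end FSA
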